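/- Let x ∈ {0,1}^m have run-length encoding (k_1, ..., k_ℓ) and let n = m + 1. Then the multiset of weights {ω_x(y) : y ∈ {0,1}^{m+1}, x a subsequence of y} consists of exactly ℓ strings with weights k_1 + 1, k_2 + 1, ..., k_ℓ + 1 respectively (one for each run extension), and exactly m − ℓ + 2 strings each of weight 1. -/

import Mathlib

namespace SIC

/-- number of occurrences of `x` as an (indexed) subsequence of `y` -/
abbrev N (x y : List Bool) : ℕ := y.sublists.count x

lemma flatMap_count (b : Bool) (x : List Bool) :
    ∀ S : List (List Bool),
      ((S.flatMap fun s => [s, b :: s]).count x)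
        = S.count x + S.countP (fun s => b :: s == x) := by
  intro S
  induction S with
  | nil => simp
  | cons s S ih =>
      simp only [List.flatMap_cons, List.count_append, List.count_cons, List.countP_cons, ih]
      simp [List.count_cons, List.count_nil]
      by_cases h1 : s = x <;> by_cases h2 : b :: s = x <;> simp [h1, h2] <;> omega

lemma N_cons_cons (b c : Bool) (x' y : List Bool) :
    N (c :: x') (b :: y) = N (c :: x') y + (if c = b then N x' y else 0) := by
  unfold N
  rw [List.sublists_cons]
  show ((y.sublists.flatMap fun s => [s, b :: s]).count (c :: x')) = _
  rw [flatMap_count]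
  congr 1
  by_cases hc : c = b
  · subst hc
    rw [if_pos rfl]
    have : (fun s => c :: s == c :: x') = (fun s => s == x') := by
      funext s
      by_cases h : s = x' <;> simp [h]
    rw [this]
    rfl
  · rw [if_neg hc]
    apply List.countP_eq_zero.2
    intro s _
    simp only [beq_iff_eq]
    intro hcontra
    exact hc ((List.cons.injEq ..) ▸ hcontra :  b = c ∧ s = x').1.symm

lemma N_nil (y : List Bool) : N [] y = 1 := by
  induction y with
  | nil => simp [N]
  | cons b y ih =>
      unfold N
      rw [List.sublists_cons]
      show ((y.sublists.flatMap fun s => [s, b :: s]).count []) = 1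
      rw [flatMap_count]
      have : (y.sublists.countP (fun s => b :: s == [])) = 0 :=
        List.countP_eq_zero.2 (by intro s _; simp)
      rw [this]
      simpa using ih

lemma N_eq_zero_of_lt {x y : List Bool} (h : y.length < x.length) : N x y = 0 := by
  apply List.count_eq_zero.2
  intro hmem
  have := (List.mem_sublists.1 hmem).length_le
  omega

lemma N_self (y : List Bool) : N y y = 1 := by
  induction y with
  | nil => simp [N]
  | cons b y ih =>
      rw [N_cons_cons]
      have h0 : N (b :: y) y = 0 := N_eq_zero_of_lt (by simp)
      simp [h0, ih]

lemma N_of_length_eq {x y : List Bool} (h : x.length = y.length) :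
    N x y = if x = y then 1 else 0 := by
  by_cases hxy : x = y
  · simp [hxy, N_self]
  · simp only [hxy, if_false]
    apply List.count_eq_zero.2
    intro hmem
    exact hxy ((List.mem_sublists.1 hmem).eq_of_length h)

/-- length of the maximal constant-`b` suffix -/
def srun (b : Bool) : List Bool → ℕ
  | [] => 0
  | c :: u => if c = b ∧ ∀ d ∈ u, d = b then u.length + 1 else srun b u

@[simp] lemma srun_nil (b : Bool) : srun b [] = 0 := rfl

lemma srun_cons (b c : Bool) (u : List Bool) :
    srun b (c :: u) = if c = b ∧ ∀ d ∈ u, d = b then u.length + 1 else srun b u := rfl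

lemma srun_eq_length (b : Bool) (u : List Bool) (h : ∀ d ∈ u, d = b) :
    srun b u = u.length := by
  induction u with
  | nil => rfl
  | cons c u ih =>
      rw [srun_cons, if_pos ⟨h c (by simp), fun d hd => h d (by simp [hd])⟩]
      simp

lemma srun_eq_zero_of_all_ne (b : Bool) (u : List Bool) (e : Bool) (he : e ≠ b)
    (h : ∀ d ∈ u, d = e) : srun b u = 0 := by
  induction u with
  | nil => rfl
  | cons c u ih =>
      rw [srun_cons, if_neg, ih (fun d hd => h d (by simp [hd]))]
      rintro ⟨h1, _⟩
      exact he ((h c (by simp)) ▸ h1)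

lemma srun_append_replicate (b : Bool) (s : List Bool) (n : ℕ) :
    srun b (s ++ List.replicate n b) = srun b s + n := by
  induction s with
  | nil =>
      simp only [List.nil_append, srun_nil, Nat.zero_add]
      cases n with
      | zero => rfl
      | succ n =>
          rw [List.replicate_succ, srun_cons,
            if_pos ⟨rfl, fun d hd => List.eq_of_mem_replicate hd⟩]
          simp
  | cons c s ih =>
      rw [List.cons_append, srun_cons, srun_cons]
      by_cases hall : c = b ∧ ∀ d ∈ s, d = b
      · have : c = b ∧ ∀ d ∈ s ++ List.replicate n b, d = b := by
          refine ⟨hall.1, fun d hd => ?_⟩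
          rcases List.mem_append.1 hd with hd | hd
          · exact hall.2 d hd
          · exact List.eq_of_mem_replicate hd
        rw [if_pos this, if_pos hall]
        simp; omega
      · have : ¬(c = b ∧ ∀ d ∈ s ++ List.replicate n b, d = b) := by
          rintro ⟨h1, h2⟩
          exact hall ⟨h1, fun d hd => h2 d (List.mem_append.2 (Or.inl hd))⟩
        rw [if_neg this, if_neg hall, ih]

lemma srun_append_singleton_ne (b c : Bool) (s : List Bool) (hc : c ≠ b) :
    srun b (s ++ [c]) = 0 := by
  induction s with
  | nil => rw [List.nil_append, srun_cons, if_neg (by rintro ⟨h1, _⟩; exact hc h1)]; rfl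
  | cons d s ih =>
      rw [List.cons_append, srun_cons, if_neg, ih]
      rintro ⟨_, h2⟩
      exact hc (h2 c (by simp))

lemma srun_pos_append (b : Bool) (s u : List Bool) (hu : u ≠ [])
    (h : 0 < srun b (s ++ u)) : 0 < srun b u := by
  induction s with
  | nil => simpa using h
  | cons c s ih =>
      rw [List.cons_append, srun_cons] at h
      by_cases hall : c = b ∧ ∀ d ∈ s ++ u, d = b
      · have : ∀ d ∈ u, d = b := fun d hd => hall.2 d (List.mem_append.2 (Or.inr hd))
        rw [srun_eq_length b u this]
        exact List.length_pos_iff.2 hu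
      · exact ih (by rwa [if_neg hall] at h)

lemma rotate_eq_iff (b : Bool) : ∀ (u v : List Bool) (c : Bool),
    (c :: (u ++ v) = u ++ b :: v) ↔ (c = b ∧ ∀ d ∈ u, d = b) := by
  intro u
  induction u with
  | nil => simp
  | cons d u ih =>
      intro v c
      simp only [List.cons_append, List.cons.injEq]
      constructor
      · rintro ⟨hcd, h2⟩
        obtain ⟨hdb, hall⟩ := (ih v d).1 h2
        refine ⟨hcd.trans hdb, fun e he => ?_⟩
        rcases List.mem_cons.1 he with rfl | he
        · exact hdb
        · exact hall e he
      · rintro ⟨hcb, hall⟩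
        have hdb : d = b := hall d (by simp)
        exact ⟨hcb.trans hdb.symm, (ih v d).2 ⟨hdb, fun e he => hall e (by simp [he])⟩⟩

/-- The weight of a canonical insertion. -/
lemma weight_eq (b : Bool) : ∀ (u v : List Bool),
    (v = [] ∨ v.head? ≠ some b) →
    N (u ++ v) (u ++ b :: v) = srun b u + 1 := by
  intro u
  induction u with
  | nil =>
      intro v hv
      simp only [List.nil_append, srun_nil]
      rcases v with _ | ⟨c, v'⟩
      · simpa using N_nil [b]
      · have hcb : c ≠ b := by
          rcases hv with hv | hv
          · exact absurd hv (by simp)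
          · intro h; exact hv (by simp [h])
        rw [N_cons_cons, N_self, if_neg hcb]
  | cons c u ih =>
      intro v hv
      simp only [List.cons_append]
      rw [N_cons_cons, if_pos rfl]
      rw [ih v hv]
      have hlen : (c :: (u ++ v)).length = (u ++ b :: v).length := by simp; omega
      rw [N_of_length_eq hlen]
      rw [srun_cons]
      by_cases hc : c = b ∧ ∀ d ∈ u, d = b
      · rw [if_pos ((rotate_eq_iff b u v c).2 hc), if_pos hc]
        rw [srun_eq_length b u hc.2]
        omega
      · rw [if_neg (fun h => hc ((rotate_eq_iff b u v c).1 h)), if_neg hc]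
        omega

lemma exists_decomp : ∀ {x y : List Bool}, x.Sublist y →
    y.length = x.length + 1 → ∃ u b v, x = u ++ v ∧ y = u ++ b :: v := by
  intro x y h
  induction h with
  | slnil => intro h; simp at h
  | cons a h ih =>
      intro hlen
      rename_i l₁ l₂
      have : l₁ = l₂ := h.eq_of_length (by simp at hlen; omega)
      exact ⟨[], a, l₁, by simp, by simp [this]⟩
  | cons_cons a h ih =>
      intro hlen
      obtain ⟨u, b, v, h1, h2⟩ := ih (by simpa using hlen)
      exact ⟨a :: u, b, v, by simp [h1], by simp [h2]⟩

lemma exists_canon_aux : ∀ (n : ℕ) (u : List Bool) (b : Bool) (v : List Bool), v.length ≤ n →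
    ∃ u' b' v', u' ++ v' = u ++ v ∧ u' ++ b' :: v' = u ++ b :: v ∧
      (v' = [] ∨ v'.head? ≠ some b') := by
  intro n
  induction n with
  | zero =>
      intro u b v hv
      have : v = [] := by cases v <;> simp_all
      exact ⟨u, b, v, rfl, rfl, Or.inl this⟩
  | succ n ih =>
      intro u b v hv
      rcases v with _ | ⟨c, v''⟩
      · exact ⟨u, b, [], rfl, rfl, Or.inl rfl⟩
      · by_cases hcb : c = b
        · subst hcb
          obtain ⟨u', b', v', h1, h2, h3⟩ := ih (u ++ [c]) c v'' (by simp at hv ⊢; omega)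
          exact ⟨u', b', v', by simpa using h1, by simpa using h2, h3⟩
        · exact ⟨u, b, c :: v'', rfl, rfl, Or.inr (by simp [Ne.symm hcb]; exact fun h => hcb h)⟩

lemma canon_inj_aux {u₁ v₁ u₂ v₂ : List Bool} {b₁ b₂ : Bool} (hx : u₁ ++ v₁ = u₂ ++ v₂)
    (hy : u₁ ++ b₁ :: v₁ = u₂ ++ b₂ :: v₂)
    (hc₁ : v₁ = [] ∨ v₁.head? ≠ some b₁) (hpre : u₁ <+: u₂) :
    u₁ = u₂ := by
  obtain ⟨t, rfl⟩ := hpre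
  rcases t with _ | ⟨e, t'⟩
  · simp
  · exfalso
    rw [List.append_assoc] at hy hx
    have hy' := List.append_cancel_left hy
    have hx' := List.append_cancel_left hx
    simp only [List.cons_append, List.cons.injEq] at hy'
    obtain ⟨rfl, _⟩ := hy'
    rcases hc₁ with h | h
    · simp [h] at hx'
    · rw [hx'] at h
      simp at h

lemma canon_inj {u₁ v₁ u₂ v₂ : List Bool} {b₁ b₂ : Bool} (hx : u₁ ++ v₁ = u₂ ++ v₂)
    (hy : u₁ ++ b₁ :: v₁ = u₂ ++ b₂ :: v₂)
    (hc₁ : v₁ = [] ∨ v₁.head? ≠ some b₁) (hc₂ : v₂ = [] ∨ v₂.head? ≠ some b₂) :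
    u₁ = u₂ ∧ b₁ = b₂ ∧ v₁ = v₂ := by
  have hp₁ : u₁ <+: (u₁ ++ b₁ :: v₁) := List.prefix_append _ _
  have hp₂ : u₂ <+: (u₁ ++ b₁ :: v₁) := hy ▸ List.prefix_append _ _
  have hu : u₁ = u₂ := by
    rcases List.prefix_or_prefix_of_prefix hp₁ hp₂ with h | h
    · exact canon_inj_aux hx hy hc₁ h
    · exact (canon_inj_aux hx.symm hy.symm hc₂ h).symm
  subst hu
  have := List.append_cancel_left hy
  simp only [List.cons.injEq] at this
  exact ⟨rfl, this.1, this.2⟩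

def dec (c : List (Bool × ℕ)) : List Bool := (c.map fun p => List.replicate p.2 p.1).flatten

@[simp] lemma dec_nil : dec [] = [] := rfl

lemma dec_cons (p : Bool × ℕ) (c : List (Bool × ℕ)) :
    dec (p :: c) = List.replicate p.2 p.1 ++ dec c := by
  simp [dec]

lemma boundary : ∀ (c : List (Bool × ℕ)), (∀ p ∈ c, 1 ≤ p.2) →
    ∀ (u : List Bool) (b : Bool) (v : List Bool),
      u ++ v = dec c → (v = [] ∨ v.head? ≠ some b) → 1 ≤ srun b u →
    ∃ c₁ p c₂, c = c₁ ++ p :: c₂ ∧ p.1 = b ∧ u = dec (c₁ ++ [p]) ∧ v = dec c₂ := by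
  intro c
  induction c with
  | nil =>
      intro _ u b v huv _ hs
      have hu : u = [] := by
        have := congrArg List.length huv
        simp at this
        exact this.1
      rw [hu] at hs; simp [srun] at hs
  | cons p c' ih =>
      intro hpure u b v huv hv hs
      rw [dec_cons] at huv
      set e := p.1 with he
      set n := p.2 with hn
      by_cases hlen : u.length ≤ n
      · -- u is a prefix of the first run
        have hu : u = List.replicate u.length e := by
          have h1 : u = (u ++ v).take u.length := List.take_left.symm
          rw [huv] at h1
          rw [List.take_append, List.take_replicate,
            min_eq_left (by simpa using hlen)] at h1
          simp only [List.length_replicate, Nat.sub_eq_zero_of_le (by simpa using hlen),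
            List.take_zero, List.append_nil] at h1
          exact h1
        have hub : ∀ d ∈ u, d = e := fun d hd => List.eq_of_mem_replicate (hu ▸ hd)
        have heb : e = b := by
          by_contra hne
          rw [srun_eq_zero_of_all_ne b u e hne hub] at hs
          omega
        have hulen : u.length = n := by
          by_contra hne
          have hlt : u.length < n := lt_of_le_of_ne hlen hne
          -- then v starts with e = b, contradicting canonicity
          have hv' : v = (u ++ v).drop u.length := by simp
          rw [huv, List.drop_append, List.drop_replicate] at hv'
          have h2 : n - u.length ≠ 0 := by omega
          obtain ⟨m, hm⟩ := Nat.exists_eq_succ_of_ne_zero h2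
          rw [List.length_replicate, Nat.sub_eq_zero_of_le (le_of_lt hlt), List.drop_zero,
            hm, List.replicate_succ] at hv'
          rcases hv with h | h
          · rw [h] at hv'; simp at hv'
          · rw [hv'] at h; simp [heb] at h
        -- split exactly after the first run
        have hune : u ≠ [] := by
          intro h; rw [h] at hs; simp [srun] at hs
        refine ⟨[], p, c', by simp, heb ▸ rfl, ?_, ?_⟩
        · rw [List.nil_append, dec_cons, dec_nil, List.append_nil, hu, hulen]
        · have h5 := huv
          rw [hu, hulen] at h5
          exact List.append_cancel_left h5
      · -- u properly contains the first run
        push_neg at hlen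
        have hu : u = List.replicate n e ++ u.drop n := by
          have h1 : u.take n = List.replicate n e := by
            have h2 : (u ++ v).take n = u.take n :=
              List.take_append_of_le_length (le_of_lt hlen)
            rw [huv] at h2
            rw [List.take_append, List.take_replicate, min_eq_left (by simp),
              List.length_replicate, Nat.sub_self, List.take_zero, List.append_nil] at h2
            exact h2.symm
          conv_lhs => rw [← List.take_append_drop n u]
          rw [h1]
        have hu'ne : u.drop n ≠ [] := by
          intro h
          have := congrArg List.length h
          simp at this
          omega
        have huv' : u.drop n ++ v = dec c' := by
          have : (List.replicate n e ++ u.drop n) ++ v = List.replicate n e ++ dec c' := by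
            rw [← hu, huv]
          rw [List.append_assoc] at this
          exact List.append_cancel_left this
        have hs' : 1 ≤ srun b (u.drop n) := by
          apply srun_pos_append b (List.replicate n e) (u.drop n) hu'ne
          rw [← hu]; exact hs
        obtain ⟨c₁, q, c₂, hc, hq, hdu, hdv⟩ :=
          ih (fun r hr => hpure r (by simp [hr])) (u.drop n) b v huv' hv hs'
        refine ⟨p :: c₁, q, c₂, by rw [hc]; rfl, hq, ?_, hdv⟩
        rw [List.cons_append, dec_cons, ← hdu, ← hu]

lemma sum_take_lt (K : List ℕ) (hK : ∀ t ∈ K, 1 ≤ t) {j j' : ℕ} (h : j < j')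
    (h' : j' ≤ K.length) : (K.take j).sum < (K.take j').sum := by
  have hj : j < K.length := lt_of_lt_of_le h h'
  have h1 : (K.take (j + 1)).sum = (K.take j).sum + K[j] := List.sum_take_succ K j hj
  have h2 : (K.take (j + 1)).sum ≤ (K.take j').sum := by
    conv_rhs => rw [← List.take_append_drop (j + 1) (K.take j')]
    rw [List.sum_append, List.take_take, min_eq_left h]
    exact Nat.le_add_right _ _
  have h3 : 1 ≤ K[j] := hK _ (List.getElem_mem hj)
  omega

section Runs

variable {ℓ : ℕ} (a : Fin ℓ → Bool) (k : Fin ℓ → ℕ)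

def R : List (List Bool) := List.ofFn fun i => List.replicate (k i) (a i)

def ui (i : Fin ℓ) : List Bool := ((R a k).take (i.1 + 1)).flatten
def vi (i : Fin ℓ) : List Bool := ((R a k).drop (i.1 + 1)).flatten

lemma length_R : (R a k).length = ℓ := List.length_ofFn

lemma getElem_R (n : ℕ) (h : n < ℓ) :
    (R a k)[n]'(by rw [length_R]; exact h) = List.replicate (k ⟨n, h⟩) (a ⟨n, h⟩) := by
  simp [R]

lemma ui_append_vi (i : Fin ℓ) : ui a k i ++ vi a k i = (R a k).flatten := by
  rw [ui, vi, ← List.flatten_append, List.take_append_drop]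

lemma take_succ_R (n : ℕ) (h : n < ℓ) :
    (R a k).take (n + 1) = (R a k).take n ++ [List.replicate (k ⟨n, h⟩) (a ⟨n, h⟩)] := by
  rw [List.take_succ, List.getElem?_eq_getElem (by rw [length_R]; exact h), getElem_R]
  rfl

lemma flatten_take_succ (n : ℕ) (h : n < ℓ) :
    ((R a k).take (n + 1)).flatten
      = ((R a k).take n).flatten ++ List.replicate (k ⟨n, h⟩) (a ⟨n, h⟩) := by
  rw [take_succ_R a k n h, List.flatten_append]
  simp

variable (halt : ∀ i : Fin ℓ, ∀ h : i.1 + 1 < ℓ, a i ≠ a ⟨i.1 + 1, h⟩)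
variable (hk : ∀ i, 1 ≤ k i)

include halt hk in
lemma srun_flatten_take (i : Fin ℓ) : srun (a i) (((R a k).take i.1).flatten) = 0 := by
  rcases hn : i.1 with _ | t
  · simp [srun]
  · have ht : t < ℓ := by omega
    have ht1 : t + 1 < ℓ := by omega
    rw [flatten_take_succ a k t ht]
    have hkt := hk ⟨t, ht⟩
    obtain ⟨s, hs⟩ : ∃ s, k ⟨t, ht⟩ = s + 1 := ⟨k ⟨t, ht⟩ - 1, by omega⟩
    rw [hs, List.replicate_succ', ← List.append_assoc]
    apply srun_append_singleton_ne
    have : a i = a ⟨t + 1, ht1⟩ := by congr 1; exact Fin.ext hn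
    rw [this]
    exact halt ⟨t, ht⟩ ht1

include halt hk in
lemma srun_ui (i : Fin ℓ) : srun (a i) (ui a k i) = k i := by
  rw [ui, flatten_take_succ a k i.1 i.2]
  have : (⟨i.1, i.2⟩ : Fin ℓ) = i := Fin.eta i i.2
  rw [this, srun_append_replicate, srun_flatten_take a k halt hk]
  omega

include halt hk in
lemma vi_canon (i : Fin ℓ) : vi a k i = [] ∨ (vi a k i).head? ≠ some (a i) := by
  by_cases h : i.1 + 1 < ℓ
  · right
    rw [vi, List.drop_eq_getElem_cons (by rw [length_R]; exact h), getElem_R a k _ h]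
    obtain ⟨s, hs⟩ : ∃ s, k ⟨i.1 + 1, h⟩ = s + 1 :=
      ⟨k ⟨i.1 + 1, h⟩ - 1, by have := hk ⟨i.1 + 1, h⟩; omega⟩
    rw [hs, List.replicate_succ]
    simp only [List.flatten_cons, List.cons_append, List.head?_cons, ne_eq, Option.some.injEq]
    intro hcontra
    exact halt i h hcontra.symm
  · left
    rw [vi, List.drop_eq_nil_of_le (by rw [length_R]; omega)]
    rfl

lemma length_ui (i : Fin ℓ) :
    (ui a k i).length = ((List.ofFn k).take (i.1 + 1)).sum := by
  rw [ui, List.length_flatten, List.map_take]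
  congr 2
  rw [R, List.map_ofFn]
  congr 1
  funext j
  simp

include hk in
lemma ui_inj {i i' : Fin ℓ} (h : ui a k i = ui a k i') : i = i' := by
  by_contra hne
  have hK : ∀ t ∈ List.ofFn k, 1 ≤ t := by
    intro t ht
    obtain ⟨j, rfl⟩ := List.mem_ofFn.1 ht
    exact hk j
  have hlen := congrArg List.length h
  rw [length_ui, length_ui] at hlen
  rcases Nat.lt_or_ge i.1 i'.1 with hlt | hge
  · exact absurd hlen (Nat.ne_of_lt (sum_take_lt _ hK (by omega)
      (by rw [List.length_ofFn]; exact i'.2)))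
  · have hlt : i'.1 < i.1 := by
      rcases Nat.lt_or_ge i'.1 i.1 with h' | h'
      · exact h'
      · exact absurd (Fin.ext (le_antisymm hge h')).symm hne
    exact absurd hlen.symm (Nat.ne_of_lt (sum_take_lt _ hK (by omega)
      (by rw [List.length_ofFn]; exact i.2)))

include hk in
lemma runs_surj (u : List Bool) (b : Bool) (v : List Bool)
    (huv : u ++ v = (R a k).flatten) (hcanon : v = [] ∨ v.head? ≠ some b)
    (hs : 1 ≤ srun b u) :
    ∃ i : Fin ℓ, u = ui a k i ∧ b = a i ∧ v = vi a k i := by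
  set c : List (Bool × ℕ) := List.ofFn (fun i => (a i, k i)) with hcdef
  have hmapc : c.map (fun p => List.replicate p.2 p.1) = R a k := by
    rw [hcdef, List.map_ofFn]; rfl
  have hdec : dec c = (R a k).flatten := by rw [dec, hmapc]
  have hpure : ∀ p ∈ c, 1 ≤ p.2 := by
    intro p hp
    obtain ⟨j, rfl⟩ := List.mem_ofFn.1 hp
    exact hk j
  obtain ⟨c₁, q, c₂, hc, hq, hdu, hdv⟩ :=
    boundary c hpure u b v (by rw [hdec]; exact huv) hcanon hs
  have hclen : c.length = ℓ := List.length_ofFn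
  set n := c₁.length with hndef
  have hn : n < ℓ := by
    have := congrArg List.length hc
    simp [hclen, ← hndef] at this
    omega
  have h1 : c.drop n = q :: c₂ := by rw [hc, hndef, List.drop_left]
  have h2 := List.drop_eq_getElem_cons (l := c) (i := n) (by omega)
  rw [h1] at h2
  injection h2 with h3 h4
  have hgetn : (c)[n]'(by omega) = (a ⟨n, hn⟩, k ⟨n, hn⟩) := by simp [hcdef]
  have htaken : c.take n = c₁ := by rw [hc, hndef, List.take_left]
  have htake : c.take (n + 1) = c₁ ++ [q] := by
    rw [List.take_succ, List.getElem?_eq_getElem (by omega), ← h3, htaken]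
    rfl
  refine ⟨⟨n, hn⟩, ?_, ?_, ?_⟩
  · rw [hdu, ← htake, ui, dec, List.map_take, hmapc]
  · rw [← hq, h3]
    exact congrArg Prod.fst hgetn
  · rw [hdv, h4, vi, dec, List.map_drop, hmapc]

end Runs

end SIC

open SIC

/-- Clustering for single insertions: for `x` of length `m` with run-length encoding
`(k_1, …, k_ℓ)`, among the supersequences `y ∈ {0,1}^{m+1}` of `x` there are, for each
weight `w ≥ 2`, exactly as many supersequences of weight `w` as runs with `k_i + 1 = w`
(one per run extension), and exactly `m - ℓ + 2` supersequences of weight `1`. -/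
theorem single_insertion_clustering (ℓ m : ℕ) (a : Fin ℓ → Bool) (k : Fin ℓ → ℕ)
    (halt : ∀ i : Fin ℓ, ∀ h : i.1 + 1 < ℓ, a i ≠ a ⟨i.1 + 1, h⟩)
    (hk : ∀ i, 1 ≤ k i) (hm : ∑ i, k i = m)
    (x : List Bool) (hx : x = (List.ofFn fun i => List.replicate (k i) (a i)).flatten) :
    (∀ w : ℕ, 2 ≤ w →
      Nat.card {y : List Bool // y.length = m + 1 ∧ y.sublists.count x = w} =
        Nat.card {i : Fin ℓ // k i + 1 = w}) ∧
    Nat.card {y : List Bool // y.length = m + 1 ∧ y.sublists.count x = 1} =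
      m - ℓ + 2 := by
  have hxR : x = (R a k).flatten := hx
  have hxlen : x.length = m := by
    rw [hxR, List.length_flatten, R, List.map_ofFn]
    have : (List.length ∘ fun i => List.replicate (k i) (a i)) = k := by
      funext j; simp
    rw [this, List.sum_ofFn, hm]
  have hlm : ℓ ≤ m := by
    have h1 : ∑ _i : Fin ℓ, 1 ≤ ∑ i, k i := Finset.sum_le_sum (fun i _ => hk i)
    simpa [hm] using h1
  set canon : List Bool × Bool × List Bool → Prop :=
    fun p => p.1 ++ p.2.2 = x ∧ (p.2.2 = [] ∨ p.2.2.head? ≠ some p.2.1) with hcanon_def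
  -- Step I : per-weight bijection between supersequences and canonical decompositions
  have key : ∀ w : ℕ, 1 ≤ w →
      Nat.card {y : List Bool // y.length = m + 1 ∧ y.sublists.count x = w} =
      Nat.card {p : List Bool × Bool × List Bool // canon p ∧ srun p.2.1 p.1 + 1 = w} := by
    intro w hw
    have hwd : ∀ p : {p : List Bool × Bool × List Bool // canon p ∧ srun p.2.1 p.1 + 1 = w},
        (p.1.1 ++ p.1.2.1 :: p.1.2.2).length = m + 1 ∧
        List.count x (p.1.1 ++ p.1.2.1 :: p.1.2.2).sublists = w := by
      rintro ⟨⟨u, b, v⟩, ⟨hc1, hc2⟩, hwt⟩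
      constructor
      · have := congrArg List.length hc1
        simp at this ⊢
        omega
      · show N x (u ++ b :: v) = w
        rw [← hc1]
        rw [weight_eq b u v hc2, hwt]
    refine (Nat.card_eq_of_bijective
      (fun p => ⟨p.1.1 ++ p.1.2.1 :: p.1.2.2, hwd p⟩) ⟨?_, ?_⟩).symm
    · -- injective
      rintro ⟨⟨u₁, b₁, v₁⟩, ⟨hc1, hc2⟩, hw1⟩ ⟨⟨u₂, b₂, v₂⟩, ⟨hd1, hd2⟩, hw2⟩ heq
      simp only [Subtype.mk.injEq] at heq
      obtain ⟨e1, e2, e3⟩ := canon_inj (hc1.trans hd1.symm) heq hc2 hd2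
      simp only [Subtype.mk.injEq, Prod.mk.injEq]
      exact ⟨e1, e2, e3⟩
    · -- surjective
      rintro ⟨y, hylen, hycount⟩
      have hmem : x ∈ y.sublists := List.count_pos_iff.1 (by omega)
      have hsub : x.Sublist y := List.mem_sublists.1 hmem
      obtain ⟨u, b, v, hx1, hy1⟩ := exists_decomp hsub (by omega)
      obtain ⟨u', b', v', e1, e2, e3⟩ := exists_canon_aux v.length u b v le_rfl
      have hcan : canon (u', b', v') := ⟨e1.trans hx1.symm, e3⟩
      have hwt : srun b' u' + 1 = w := by
        rw [← weight_eq b' u' v' e3]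
        show N (u' ++ v') (u' ++ b' :: v') = w
        rw [e1, e2, ← hx1, ← hy1]
        exact hycount
      exact ⟨⟨(u', b', v'), hcan, hwt⟩, Subtype.ext (e2.trans hy1.symm)⟩
  -- Step II : heavy decompositions biject with runs
  have heavybij : ∀ (P : ℕ → Prop),
      (∀ p : List Bool × Bool × List Bool, canon p → P (srun p.2.1 p.1) → 1 ≤ srun p.2.1 p.1) →
      Nat.card {i : Fin ℓ // P (k i)} =
      Nat.card {p : List Bool × Bool × List Bool // canon p ∧ P (srun p.2.1 p.1)} := by
    intro P hP1
    have hwd : ∀ i : Fin ℓ, P (k i) →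
        canon (ui a k i, a i, vi a k i) ∧ P (srun (a i) (ui a k i)) := by
      intro i hPk
      refine ⟨⟨?_, vi_canon a k halt hk i⟩, ?_⟩
      · show ui a k i ++ vi a k i = x
        rw [hxR]
        exact ui_append_vi a k i
      · rw [srun_ui a k halt hk i]; exact hPk
    refine Nat.card_eq_of_bijective
      (fun q => ⟨(ui a k q.1, a q.1, vi a k q.1), hwd q.1 q.2⟩) ⟨?_, ?_⟩
    · rintro ⟨i, hi⟩ ⟨i', hi'⟩ heq
      simp only [Subtype.mk.injEq, Prod.mk.injEq] at heq
      exact Subtype.ext (ui_inj a k hk heq.1)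
    · rintro ⟨⟨u, b, v⟩, ⟨hc1, hc2⟩, hP⟩
      obtain ⟨i, e1, e2, e3⟩ := runs_surj a k hk u b v (hc1.trans hxR) hc2
        (hP1 (u, b, v) ⟨hc1, hc2⟩ hP)
      have hki : P (k i) := by
        rw [← srun_ui a k halt hk i, ← e1, ← e2]; exact hP
      refine ⟨⟨i, hki⟩, Subtype.ext ?_⟩
      simp [← e1, ← e2, ← e3]
  -- the set of all canonical decompositions has size m + 2
  obtain ⟨e4⟩ : Nonempty ({p : List Bool × Bool × List Bool // canon p} ≃ (Fin m ⊕ Bool)) := by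
    refine ⟨{
      toFun := fun q => if h : q.1.2.2 = [] then Sum.inr q.1.2.1 else
        Sum.inl ⟨q.1.1.length, ?_⟩
      invFun := Sum.elim
        (fun t => ⟨(x.take t.1, !((x.drop t.1).headI), x.drop t.1), ?_, ?_⟩)
        (fun b => ⟨(x, b, []), by simp, Or.inl rfl⟩)
      left_inv := ?_
      right_inv := ?_ }⟩
    · -- u.length < m
      have h1 := congrArg List.length q.2.1
      simp only [List.length_append, hxlen] at h1
      have h2 := List.length_pos_iff.2 h
      omega
    · simp
    · -- canonicity of the take/drop decomposition
      right
      show (x.drop t.1).head? ≠ some (!((x.drop t.1).headI))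
      have hne : x.drop t.1 ≠ [] := by
        intro h
        have := congrArg List.length h
        simp [hxlen] at this
        omega
      rcases hd : x.drop t.1 with _ | ⟨c, d'⟩
      · exact absurd hd hne
      · have h' : (c :: d').head? ≠ some !((c :: d').headI) := by
          rw [List.head?_cons, List.headI_cons]; simp
        exact h'
    · -- left inverse
      rintro ⟨⟨u, b, v⟩, hc1, hc2⟩
      by_cases hv : v = []
      · subst hv
        dsimp only
        rw [dif_pos rfl]
        have hu : u = x := by simpa using hc1
        simp only [Sum.elim_inr]
        exact Subtype.ext (by simp [hu])
      · dsimp only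
        rw [dif_neg hv]
        simp only [Sum.elim_inl]
        have hc1' : u ++ v = x := hc1
        have htake : x.take u.length = u := by rw [← hc1']; exact List.take_left
        have hdrop : x.drop u.length = v := by rw [← hc1']; exact List.drop_left
        have hbit : (!(v.headI)) = b := by
          rcases v with _ | ⟨c, v'⟩
          · exact absurd rfl hv
          · have h : (c :: v').head? ≠ some b := by
              rcases hc2 with h | h
              · exact absurd h hv
              · exact h
            have hcb : c ≠ b := fun hcb => h (by simp [hcb])
            simp only [List.headI_cons]
            exact (by decide : ∀ c' b' : Bool, c' ≠ b' → (!c') = b') c b hcb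
        refine Subtype.ext ?_
        show (x.take u.length, !((x.drop u.length).headI), x.drop u.length) = (u, b, v)
        rw [htake, hdrop, hbit]
    · -- right inverse
      rintro (t | b)
      · have hne : x.drop t.1 ≠ [] := by
          intro h
          have := congrArg List.length h
          simp [hxlen] at this
          omega
        simp only [Sum.elim_inl]
        simp only [hne, ↓reduceDIte]
        congr 1
        apply Fin.ext
        simp only [List.length_take, hxlen]
        omega
      · simp only [Sum.elim_inr]
        simp
  classical
  have hcardD : Nat.card {p : List Bool × Bool × List Bool // canon p} = m + 2 := by
    rw [Nat.card_congr e4, Nat.card_sum]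
    simp [Nat.card_eq_fintype_card]
  have hfinD : Finite {p : List Bool × Bool × List Bool // canon p} :=
    Finite.of_equiv _ e4.symm
  have hheavy : Nat.card {p : List Bool × Bool × List Bool //
      canon p ∧ 1 ≤ srun p.2.1 p.1} = ℓ := by
    rw [← heavybij (fun n => 1 ≤ n) (fun p _ h => h)]
    rw [Nat.card_congr (Equiv.subtypeUnivEquiv hk)]
    simp [Nat.card_eq_fintype_card]
  constructor
  · intro w hw
    rw [key w (by omega)]
    exact (heavybij (fun n => n + 1 = w) (fun p _ h => by omega)).symm
  · rw [key 1 le_rfl]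
    have e5 : {p : List Bool × Bool × List Bool // canon p ∧ srun p.2.1 p.1 + 1 = 1} ≃
        {p : List Bool × Bool × List Bool // canon p ∧ ¬ (1 ≤ srun p.2.1 p.1)} :=
      Equiv.subtypeEquivRight (fun p => by
        constructor
        · rintro ⟨h1, h2⟩; exact ⟨h1, by omega⟩
        · rintro ⟨h1, h2⟩; exact ⟨h1, by omega⟩)
    have e6 : ({p : List Bool × Bool × List Bool // canon p ∧ 1 ≤ srun p.2.1 p.1} ⊕
        {p : List Bool × Bool × List Bool // canon p ∧ ¬ (1 ≤ srun p.2.1 p.1)}) ≃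
        {p : List Bool × Bool × List Bool // canon p} :=
      ((Equiv.sumCongr
        (Equiv.subtypeSubtypeEquivSubtypeInter canon (fun p => 1 ≤ srun p.2.1 p.1))
        (Equiv.subtypeSubtypeEquivSubtypeInter canon
          (fun p => ¬ (1 ≤ srun p.2.1 p.1)))).symm).trans
        (Equiv.sumCompl (fun q : {p : List Bool × Bool × List Bool // canon p} =>
          1 ≤ srun q.1.2.1 q.1.1))
    have hfin1 : Finite {p : List Bool × Bool × List Bool //
        canon p ∧ 1 ≤ srun p.2.1 p.1} :=
      Finite.of_equiv _ (Equiv.subtypeSubtypeEquivSubtypeInter canon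
        (fun p => 1 ≤ srun p.2.1 p.1))
    have hfin2 : Finite {p : List Bool × Bool × List Bool //
        canon p ∧ ¬ (1 ≤ srun p.2.1 p.1)} :=
      Finite.of_equiv _ (Equiv.subtypeSubtypeEquivSubtypeInter canon
        (fun p => ¬ (1 ≤ srun p.2.1 p.1)))
    have hsum := Nat.card_congr e6
    rw [Nat.card_sum, hheavy, hcardD] at hsum
    rw [Nat.card_congr e5]
    omega
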